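/- Suppose x_ℂ(ε₃) is a complex solution of the second-order equation obtained from ẋ = y₃, ẏ₃ = -x - (1/2)ε₃y₃, ε̇₃ = -(3/2)ε₃² that satisfies x_ℂ(ε₃) = ε₃^{1/6} exp(i(2/(3ε₃) - π/4))(1 + O(ε₃)) as ε₃ → 0⁺. Then x_ℂ(ε₃) = √π (Ai - iBi)(-ε₃^{-2/3}) for all sufficiently small ε₃ > 0. -/

import Mathlib

open Set Real

private lemma eq_zero_of_small (c : ℂ) (K : ℝ)
    (h : ∀ δ : ℝ, 0 < δ → ∃ e : ℝ, 0 < e ∧ e < δ ∧ ‖c‖ ≤ K * e) : c = 0 := by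
  by_contra hc
  have hc' : 0 < ‖c‖ := norm_pos_iff.2 hc
  obtain ⟨e, he, hed, hb⟩ := h (‖c‖ / (|K| + 1)) (by positivity)
  have h1 : K * e ≤ (|K| + 1) * e := by nlinarith [le_abs_self K]
  have h2 : (|K| + 1) * e < (|K| + 1) * (‖c‖ / (|K| + 1)) := by
    apply mul_lt_mul_of_pos_left hed; positivity
  have h3 : (|K| + 1) * (‖c‖ / (|K| + 1)) = ‖c‖ := by field_simp
  linarith

private lemma const_of_deriv_zero {f : ℝ → ℂ} {E : ℝ}
    (hf : ∀ e ∈ Ioo (0:ℝ) E, HasDerivAt f 0 e) :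
    ∀ e₁ ∈ Ioo (0:ℝ) E, ∀ e₂ ∈ Ioo (0:ℝ) E, f e₁ = f e₂ := by
  have key : ∀ a ∈ Ioo (0:ℝ) E, ∀ b ∈ Ioo (0:ℝ) E, a ≤ b → f b = f a := by
    intro a ha b hb hab
    have hsub : Icc a b ⊆ Ioo (0:ℝ) E := fun x hx =>
      ⟨lt_of_lt_of_le ha.1 hx.1, lt_of_le_of_lt hx.2 hb.2⟩
    exact constant_of_has_deriv_right_zero
      (fun x hx => ((hf x (hsub hx)).continuousAt).continuousWithinAt)
      (fun x hx => ((hf x (hsub (Ico_subset_Icc_self hx))).hasDerivWithinAt))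
      b ⟨hab, le_refl b⟩
  intro e₁ h₁ e₂ h₂
  rcases le_total e₁ e₂ with h | h
  · exact (key e₁ h₁ e₂ h₂ h).symm
  · exact key e₂ h₂ e₁ h₁ h

private lemma seq_exists (c δ : ℝ) (hc : 0 < c) (hδ : 0 < δ) :
    ∃ (n : ℕ) (e : ℝ), 0 < e ∧ e < δ ∧ 2 / (3 * e) = 2 * π * n + c := by
  obtain ⟨n, hn⟩ := exists_nat_gt (2 / (3 * δ) / (2 * π))
  have hπ := Real.pi_pos
  have hd : (0:ℝ) < 2 * π * n + c := by positivity
  refine ⟨n, 2 / (3 * (2 * π * n + c)), by positivity, ?_, by field_simp⟩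
  have h1 : 2 / (3 * δ) < 2 * π * n + c := by
    have := (div_lt_iff₀ (by positivity)).mp hn
    nlinarith
  rw [div_lt_iff₀ (by positivity)]
  rw [div_lt_iff₀ (by positivity)] at h1
  nlinarith

private lemma airy_eval {A : ℝ → ℝ} {C z₀ : ℝ}
    (hA : ∀ z ≥ z₀, ∃ φ r : ℝ, |φ| ≤ C * z ^ (-(3:ℝ)/2) ∧ |r| ≤ C * z ^ (-(3:ℝ)/2) ∧
      A (-z) = Real.pi ^ (-(1:ℝ)/2) * z ^ (-(1:ℝ)/4)
        * Real.cos ((2/3) * z ^ ((3:ℝ)/2) - Real.pi/4 + φ) * (1 + r))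
    {e : ℝ} (he : 0 < e) (hez : z₀ ≤ e ^ (-(2:ℝ)/3)) :
    ∃ φ r : ℝ, |φ| ≤ C * e ∧ |r| ≤ C * e ∧
      A (-(e ^ (-(2:ℝ)/3))) = Real.pi ^ (-(1:ℝ)/2) * e ^ ((1:ℝ)/6)
        * Real.cos (2 / (3*e) - Real.pi/4 + φ) * (1 + r) := by
  obtain ⟨φ, r, h1, h2, h3⟩ := hA _ hez
  have k1 : (e ^ (-(2:ℝ)/3)) ^ (-(3:ℝ)/2) = e := by
    rw [← Real.rpow_mul he.le]; norm_num
  have k2 : (e ^ (-(2:ℝ)/3)) ^ ((3:ℝ)/2) = e⁻¹ := by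
    rw [← Real.rpow_mul he.le]; norm_num [Real.rpow_neg_one]
  have k3 : (e ^ (-(2:ℝ)/3)) ^ (-(1:ℝ)/4) = e ^ ((1:ℝ)/6) := by
    rw [← Real.rpow_mul he.le]; norm_num
  have k4 : 2 / 3 * e⁻¹ = 2 / (3 * e) := by field_simp
  rw [k1] at h1 h2
  rw [k2, k3, k4] at h3
  exact ⟨φ, r, h1, h2, h3⟩

private lemma airy_eval_sin {A : ℝ → ℝ} {C z₀ : ℝ}
    (hA : ∀ z ≥ z₀, ∃ φ r : ℝ, |φ| ≤ C * z ^ (-(3:ℝ)/2) ∧ |r| ≤ C * z ^ (-(3:ℝ)/2) ∧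
      A (-z) = -(Real.pi ^ (-(1:ℝ)/2)) * z ^ (-(1:ℝ)/4)
        * Real.sin ((2/3) * z ^ ((3:ℝ)/2) - Real.pi/4 + φ) * (1 + r))
    {e : ℝ} (he : 0 < e) (hez : z₀ ≤ e ^ (-(2:ℝ)/3)) :
    ∃ φ r : ℝ, |φ| ≤ C * e ∧ |r| ≤ C * e ∧
      A (-(e ^ (-(2:ℝ)/3))) = -(Real.pi ^ (-(1:ℝ)/2)) * e ^ ((1:ℝ)/6)
        * Real.sin (2 / (3*e) - Real.pi/4 + φ) * (1 + r) := by
  obtain ⟨φ, r, h1, h2, h3⟩ := hA _ hez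
  have k1 : (e ^ (-(2:ℝ)/3)) ^ (-(3:ℝ)/2) = e := by
    rw [← Real.rpow_mul he.le]; norm_num
  have k2 : (e ^ (-(2:ℝ)/3)) ^ ((3:ℝ)/2) = e⁻¹ := by
    rw [← Real.rpow_mul he.le]; norm_num [Real.rpow_neg_one]
  have k3 : (e ^ (-(2:ℝ)/3)) ^ (-(1:ℝ)/4) = e ^ ((1:ℝ)/6) := by
    rw [← Real.rpow_mul he.le]; norm_num
  have k4 : 2 / 3 * e⁻¹ = 2 / (3 * e) := by field_simp
  rw [k1] at h1 h2
  rw [k2, k3, k4] at h3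
  exact ⟨φ, r, h1, h2, h3⟩

private lemma trig_bounds {c φ r : ℝ} (hφ : |φ| ≤ c) (hr : |r| ≤ c) (hc : c ≤ 1/2) :
    |1 - Real.cos φ * (1+r)| ≤ 2*c ∧ |Real.sin φ * (1+r)| ≤ 2*c ∧
    7/16 ≤ Real.cos φ * (1+r) ∧ Real.cos φ * (1+r) ≤ 2 := by
  have hc0 : 0 ≤ c := le_trans (abs_nonneg φ) hφ
  have h1 := Real.one_sub_sq_div_two_le_cos (x := φ)
  have h2 := Real.cos_le_one φ
  have h3 := Real.abs_sin_le_abs (x := φ)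
  have h4 := abs_le.mp hφ
  have h5 := abs_le.mp hr
  have hφ2 : φ^2 ≤ c*c := by nlinarith [sq_abs φ, abs_nonneg φ]
  have hcos : 7/8 ≤ Real.cos φ := by nlinarith
  refine ⟨?_, ?_, by nlinarith, by nlinarith⟩
  · rw [abs_le]; constructor <;> nlinarith
  · rw [abs_mul]
    have := abs_le.mpr h4
    calc |Real.sin φ| * |1+r| ≤ c * (3/2) := by
          apply mul_le_mul (le_trans h3 hφ) _ (abs_nonneg _) hc0
          rw [abs_le]; constructor <;> nlinarith
      _ ≤ 2*c := by nlinarith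

private noncomputable def SolRHS (w w₁ : ℝ → ℂ) (e : ℝ) : ℂ :=
  -(5/(3*(e:ℂ))) * w₁ e - (4/9) * ((e:ℂ)⁻¹)^4 * w e

private def IsSol (w w₁ : ℝ → ℂ) (E : ℝ) : Prop :=
  ∀ e ∈ Ioo (0:ℝ) E, HasDerivAt w (w₁ e) e ∧ HasDerivAt w₁ (SolRHS w w₁ e) e

private noncomputable def Wr (u u₁ v v₁ : ℝ → ℂ) (e : ℝ) : ℂ :=
  ((e ^ ((5:ℝ)/3) : ℝ) : ℂ) * (u e * v₁ e - u₁ e * v e)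

private lemma wr_cyclic (a a₁ b b₁ c c₁ : ℝ → ℂ) (e : ℝ) :
    Wr a a₁ b b₁ e * c e + Wr b b₁ c c₁ e * a e + Wr c c₁ a a₁ e * b e = 0 := by
  simp only [Wr]; ring

private lemma wr_const {E : ℝ} {u u₁ v v₁ : ℝ → ℂ}
    (hu : IsSol u u₁ E) (hv : IsSol v v₁ E) :
    ∀ e₁ ∈ Ioo (0:ℝ) E, ∀ e₂ ∈ Ioo (0:ℝ) E, Wr u u₁ v v₁ e₁ = Wr u u₁ v v₁ e₂ := by
  apply const_of_deriv_zero
  intro e he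
  have he0 : (0:ℝ) < e := he.1
  have hec : (e:ℂ) ≠ 0 := by exact_mod_cast he0.ne'
  have hp : HasDerivAt (fun t : ℝ => ((t ^ ((5:ℝ)/3) : ℝ) : ℂ))
      (((5/3 * e ^ ((2:ℝ)/3) : ℝ) : ℂ)) e := by
    apply HasDerivAt.ofReal_comp
    have := Real.hasDerivAt_rpow_const (x := e) (p := (5:ℝ)/3) (Or.inl he0.ne')
    convert this using 1
    norm_num
  have hq : HasDerivAt (fun t : ℝ => u t * v₁ t - u₁ t * v t)
      (u e * SolRHS v v₁ e - SolRHS u u₁ e * v e) e := by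
    have h1 := ((hu e he).1.mul (hv e he).2)
    have h2 := ((hu e he).2.mul (hv e he).1)
    refine (h1.sub h2).congr_deriv ?_
    ring
  have hd := hp.mul hq
  have key : (((5/3 * e ^ ((2:ℝ)/3) : ℝ) : ℂ)) * (u e * v₁ e - u₁ e * v e)
      + ((e ^ ((5:ℝ)/3) : ℝ) : ℂ) * (u e * SolRHS v v₁ e - SolRHS u u₁ e * v e) = 0 := by
    have hpq : ((e ^ ((5:ℝ)/3) : ℝ) : ℂ) = ((e ^ ((2:ℝ)/3) : ℝ) : ℂ) * (e : ℂ) := by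
      have h : e ^ ((5:ℝ)/3) = e ^ ((2:ℝ)/3) * e := by
        rw [show ((5:ℝ)/3) = (2:ℝ)/3 + 1 by norm_num, Real.rpow_add he0, Real.rpow_one]
      rw [h]; push_cast; ring
    simp only [SolRHS]
    rw [hpq]
    field_simp
    push_cast
    ring
  rw [show (0:ℂ) = (((5/3 * e ^ ((2:ℝ)/3) : ℝ) : ℂ)) * (u e * v₁ e - u₁ e * v e)
      + ((e ^ ((5:ℝ)/3) : ℝ) : ℂ) * (u e * SolRHS v v₁ e - SolRHS u u₁ e * v e) from key.symm]
  exact hd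

private lemma airy_sol {A : ℝ → ℝ} (hA : ContDiff ℝ 2 A)
    (hODE : ∀ z : ℝ, deriv (deriv A) z = z * A z) (E : ℝ) :
    IsSol (fun t : ℝ => ((A (-(t ^ (-(2:ℝ)/3))) : ℝ) : ℂ))
      (fun t : ℝ => ((deriv A (-(t ^ (-(2:ℝ)/3))) * (2/3 * t ^ (-(5:ℝ)/3)) : ℝ) : ℂ)) E := by
  intro e he
  have he0 : (0:ℝ) < e := he.1
  have hdiffA : Differentiable ℝ A := hA.differentiable (by norm_num)
  have hdA : Differentiable ℝ (deriv A) := by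
    have h2 : ContDiff ℝ (1 + 1) A := by exact_mod_cast hA
    exact ((contDiff_succ_iff_deriv.mp h2).2.2).differentiable (by norm_num)
  have hinner : HasDerivAt (fun t : ℝ => -(t ^ (-(2:ℝ)/3))) (2/3 * e ^ (-(5:ℝ)/3)) e := by
    have h : HasDerivAt (fun t : ℝ => -(t ^ (-(2:ℝ)/3))) _ e :=
      (Real.hasDerivAt_rpow_const (x := e) (p := -(2:ℝ)/3) (Or.inl he0.ne')).neg
    convert h using 1
    rw [show (-(2:ℝ)/3 - 1) = -(5:ℝ)/3 by norm_num]
    ring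
  have hcomp1 : HasDerivAt (fun t : ℝ => A (-(t ^ (-(2:ℝ)/3))))
      (deriv A (-(e ^ (-(2:ℝ)/3))) * (2/3 * e ^ (-(5:ℝ)/3))) e := by
    have := (hdiffA (-(e ^ (-(2:ℝ)/3)))).hasDerivAt.comp e hinner
    simpa [Function.comp_def] using this
  constructor
  · exact hcomp1.ofReal_comp
  · have hcomp2 : HasDerivAt (fun t : ℝ => deriv A (-(t ^ (-(2:ℝ)/3))))
        (deriv (deriv A) (-(e ^ (-(2:ℝ)/3))) * (2/3 * e ^ (-(5:ℝ)/3))) e := by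
      have := (hdA (-(e ^ (-(2:ℝ)/3)))).hasDerivAt.comp e hinner
      simpa [Function.comp_def] using this
    have hpow : HasDerivAt (fun t : ℝ => 2/3 * t ^ (-(5:ℝ)/3))
        (2/3 * (-(5:ℝ)/3 * e ^ (-(8:ℝ)/3))) e := by
      have h := (Real.hasDerivAt_rpow_const (x := e) (p := -(5:ℝ)/3) (Or.inl he0.ne')).const_mul (2/3 : ℝ)
      refine h.congr_deriv ?_
      rw [show (-(5:ℝ)/3 - 1) = -(8:ℝ)/3 by norm_num]
    have hprod : HasDerivAt (fun t : ℝ => ((deriv A (-(t ^ (-(2:ℝ)/3))) * (2/3 * t ^ (-(5:ℝ)/3)) : ℝ) : ℂ)) _ e :=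
      (hcomp2.mul hpow).ofReal_comp
    convert hprod using 1
    rw [hODE]
    have f1 : e ^ (-(2:ℝ)/3) * (e ^ (-(5:ℝ)/3) * e ^ (-(5:ℝ)/3)) = (e⁻¹)^4 := by
      rw [← Real.rpow_add he0, ← Real.rpow_add he0,
        show (-(2:ℝ)/3 + (-(5:ℝ)/3 + -(5:ℝ)/3)) = ((-4 : ℤ) : ℝ) by norm_num,
        Real.rpow_intCast, zpow_neg, inv_pow]
      norm_cast
    have f2 : e⁻¹ * e ^ (-(5:ℝ)/3) = e ^ (-(8:ℝ)/3) := by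
      rw [← Real.rpow_neg_one, ← Real.rpow_add he0]
      norm_num
    have f1c : ((e ^ (-(2:ℝ)/3) : ℝ) : ℂ) * (((e ^ (-(5:ℝ)/3) : ℝ) : ℂ) * ((e ^ (-(5:ℝ)/3) : ℝ) : ℂ))
        = ((e:ℂ)⁻¹)^4 := by exact_mod_cast congrArg (fun x : ℝ => (x : ℂ)) f1
    have f2c : ((e:ℂ))⁻¹ * ((e ^ (-(5:ℝ)/3) : ℝ) : ℂ) = ((e ^ (-(8:ℝ)/3) : ℝ) : ℂ) := by
      exact_mod_cast congrArg (fun x : ℝ => (x : ℂ)) f2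
    simp only [SolRHS]
    push_cast
    linear_combination ((4:ℂ)/9 * ((A (-(e ^ (-(2:ℝ)/3))) : ℝ) : ℂ)) * f1c
      - (10/9 : ℂ) * ((deriv A (-(e ^ (-(2:ℝ)/3))) : ℝ) : ℂ) * f2c

set_option maxHeartbeats 4000000 in
theorem stmt_8 (Ai Bi : ℝ → ℝ) (hAi : ContDiff ℝ 2 Ai) (hBi : ContDiff ℝ 2 Bi)
    (hAiODE : ∀ z : ℝ, deriv (deriv Ai) z = z * Ai z)
    (hBiODE : ∀ z : ℝ, deriv (deriv Bi) z = z * Bi z)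
    (hAiAsymp : ∃ C > 0, ∃ z₀ > 0, ∀ z ≥ z₀, ∃ φ r : ℝ,
      |φ| ≤ C * z ^ (-(3:ℝ)/2) ∧ |r| ≤ C * z ^ (-(3:ℝ)/2) ∧
      Ai (-z) = Real.pi ^ (-(1:ℝ)/2) * z ^ (-(1:ℝ)/4)
        * Real.cos ((2/3) * z ^ ((3:ℝ)/2) - Real.pi/4 + φ) * (1 + r))
    (hBiAsymp : ∃ C > 0, ∃ z₀ > 0, ∀ z ≥ z₀, ∃ φ r : ℝ,
      |φ| ≤ C * z ^ (-(3:ℝ)/2) ∧ |r| ≤ C * z ^ (-(3:ℝ)/2) ∧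
      Bi (-z) = -(Real.pi ^ (-(1:ℝ)/2)) * z ^ (-(1:ℝ)/4)
        * Real.sin ((2/3) * z ^ ((3:ℝ)/2) - Real.pi/4 + φ) * (1 + r))
    (xC : ℝ → ℂ) (ε₀ : ℝ) (hε₀ : 0 < ε₀)
    (hxC : ContDiffOn ℝ 2 xC (Set.Ioo 0 ε₀))
    (hODE : ∀ e ∈ Set.Ioo (0:ℝ) ε₀,
      -(3/2 : ℂ) * (e:ℂ) ^ 2 * deriv (fun s : ℝ => -(3/2 : ℂ) * (s:ℂ) ^ 2 * deriv xC s) e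
        = -xC e - (1/2 : ℂ) * (e:ℂ) * (-(3/2 : ℂ) * (e:ℂ) ^ 2 * deriv xC e))
    (hasymp : ∃ C > 0, ∃ ε₁ ∈ Set.Ioc (0:ℝ) ε₀, ∀ e ∈ Set.Ioc (0:ℝ) ε₁, ∃ r : ℂ,
      ‖r‖ ≤ C * e ∧
      xC e = ((e ^ ((1:ℝ)/6) : ℝ) : ℂ)
        * Complex.exp (Complex.I * (((2 / (3*e) : ℝ) : ℂ) - ((Real.pi/4 : ℝ) : ℂ)))
        * (1 + r)) :
    ∃ ε₂ > 0, ∀ e ∈ Set.Ioc (0:ℝ) ε₂,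
      xC e = ((Real.sqrt Real.pi : ℝ) : ℂ)
        * (((Ai (-(e ^ (-(2:ℝ)/3))) : ℝ) : ℂ)
            - Complex.I * ((Bi (-(e ^ (-(2:ℝ)/3))) : ℝ) : ℂ)) := by
  obtain ⟨CA, hCA, z₀A, hz₀A, hAiA⟩ := hAiAsymp
  obtain ⟨CB, hCB, z₀B, hz₀B, hBiA⟩ := hBiAsymp
  obtain ⟨Cx, hCx, ε₁, hε₁, hxA⟩ := hasymp
  have hπ := Real.pi_pos
  set M : ℝ := max z₀A z₀B + 1 with hM
  have hM0 : 0 < M := by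
    have : 0 < max z₀A z₀B := lt_max_of_lt_left hz₀A
    linarith
  set S : ℝ := CA + CB + Cx with hSdef
  have hS0 : 0 < S := by positivity
  set E : ℝ := min ε₁ (min (M ^ (-(3:ℝ)/2)) (1/(2*S+2))) with hEdef
  have hE0 : 0 < E := lt_min hε₁.1 (lt_min (Real.rpow_pos_of_pos hM0 _) (by positivity))
  have hEε₀ : E ≤ ε₀ := le_trans (min_le_left _ _) hε₁.2
  -- membership facts
  have hmem : ∀ e ∈ Ioo (0:ℝ) E, z₀A ≤ e ^ (-(2:ℝ)/3) ∧ z₀B ≤ e ^ (-(2:ℝ)/3) ∧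
      CA * e ≤ 1/2 ∧ CB * e ≤ 1/2 ∧ Cx * e ≤ 1/2 ∧ e ≤ ε₁ := by
    intro e he
    have he0 := he.1
    have heM : e ≤ M ^ (-(3:ℝ)/2) :=
      le_trans he.2.le (le_trans (min_le_right _ _) (min_le_left _ _))
    have hMe : M ≤ e ^ (-(2:ℝ)/3) := by
      have h := Real.rpow_le_rpow_of_nonpos he0 heM (by norm_num : (-(2:ℝ)/3) ≤ 0)
      rwa [← Real.rpow_mul hM0.le, show (-(3:ℝ)/2 * (-(2:ℝ)/3)) = (1:ℝ) by norm_num,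
        Real.rpow_one] at h
    have heS : e ≤ 1/(2*S+2) :=
      le_trans he.2.le (le_trans (min_le_right _ _) (min_le_right _ _))
    have hCAS : CA ≤ S := by simp only [hSdef]; linarith
    have hCBS : CB ≤ S := by simp only [hSdef]; linarith
    have hCxS : Cx ≤ S := by simp only [hSdef]; linarith
    refine ⟨le_trans (le_trans (le_max_left _ _) (by linarith)) hMe,
      le_trans (le_trans (le_max_right _ _) (by linarith)) hMe, ?_, ?_, ?_,
      le_trans he.2.le (min_le_left _ _)⟩
    · calc CA * e ≤ S * (1/(2*S+2)) := by
            apply mul_le_mul hCAS heS he0.le hS0.le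
        _ ≤ 1/2 := by
            rw [mul_one_div, div_le_iff₀ (by positivity : (0:ℝ) < 2*S+2)]
            linarith
    · calc CB * e ≤ S * (1/(2*S+2)) := by
            apply mul_le_mul hCBS heS he0.le hS0.le
        _ ≤ 1/2 := by
            rw [mul_one_div, div_le_iff₀ (by positivity : (0:ℝ) < 2*S+2)]
            linarith
    · calc Cx * e ≤ S * (1/(2*S+2)) := by
            apply mul_le_mul hCxS heS he0.le hS0.le
        _ ≤ 1/2 := by
            rw [mul_one_div, div_le_iff₀ (by positivity : (0:ℝ) < 2*S+2)]
            linarith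
  
  -- differentiability of xC
  have hIooE : Ioo (0:ℝ) E ⊆ Ioo 0 ε₀ := fun x hx => ⟨hx.1, lt_of_lt_of_le hx.2 hEε₀⟩
  have hdxC : ∀ e ∈ Ioo (0:ℝ) E, HasDerivAt xC (deriv xC e) e := by
    intro e he
    exact ((hxC.differentiableOn (by norm_num)).differentiableAt
      (isOpen_Ioo.mem_nhds (hIooE he))).hasDerivAt
  have hcd1 : ContDiffOn ℝ 1 (deriv xC) (Ioo 0 ε₀) := hxC.deriv_of_isOpen isOpen_Ioo (by norm_num)
  have hd2 : ∀ e ∈ Ioo (0:ℝ) E, HasDerivAt (deriv xC) (deriv (deriv xC) e) e := by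
    intro e he
    exact ((hcd1.differentiableOn (by norm_num)).differentiableAt
      (isOpen_Ioo.mem_nhds (hIooE he))).hasDerivAt
  have hxsol : IsSol xC (fun t => deriv xC t) E := by
    intro e he
    have he0 := he.1
    have hec : (e:ℂ) ≠ 0 := by exact_mod_cast he0.ne'
    refine ⟨hdxC e he, ?_⟩
    have h1 : HasDerivAt (fun s : ℝ => ((s:ℝ):ℂ)) 1 e := by
      simpa using (hasDerivAt_id e).ofReal_comp
    have heq := hODE e (hIooE he)
    simp only [pow_two] at heq
    have hsq : HasDerivAt (fun s : ℝ => ((s:ℝ):ℂ) * ((s:ℝ):ℂ)) (1*(e:ℂ) + (e:ℂ)*1) e :=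
      h1.mul h1
    have hpoly : HasDerivAt (fun s : ℝ => -(3/2:ℂ) * (((s:ℝ):ℂ) * ((s:ℝ):ℂ)))
        (-(3/2:ℂ) * (1*(e:ℂ) + (e:ℂ)*1)) e := hsq.const_mul _
    have hmul : HasDerivAt (fun s : ℝ => -(3/2:ℂ) * (((s:ℝ):ℂ) * ((s:ℝ):ℂ)) * deriv xC s) _ e :=
      hpoly.mul (hd2 e he)
    rw [hmul.deriv] at heq
    have goal : SolRHS xC (fun t => deriv xC t) e = deriv (deriv xC) e := by
      simp only [SolRHS]
      field_simp
      linear_combination (-12:ℂ) * heq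
    rw [goal]
    exact hd2 e he
  
  -- the Airy comparison functions
  set GA : ℝ → ℂ := fun t : ℝ => ((Ai (-(t ^ (-(2:ℝ)/3))) : ℝ) : ℂ) with hGAdef
  set GA1 : ℝ → ℂ := fun t : ℝ => ((deriv Ai (-(t ^ (-(2:ℝ)/3))) * (2/3 * t ^ (-(5:ℝ)/3)) : ℝ) : ℂ) with hGA1def
  set GB : ℝ → ℂ := fun t : ℝ => ((Bi (-(t ^ (-(2:ℝ)/3))) : ℝ) : ℂ) with hGBdef
  set GB1 : ℝ → ℂ := fun t : ℝ => ((deriv Bi (-(t ^ (-(2:ℝ)/3))) * (2/3 * t ^ (-(5:ℝ)/3)) : ℝ) : ℂ) with hGB1def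
  have hsolA : IsSol GA GA1 E := airy_sol hAi hAiODE E
  have hsolB : IsSol GB GB1 E := airy_sol hBi hBiODE E
  set X : ℝ → ℂ := fun t : ℝ => xC t - ((Real.sqrt Real.pi : ℝ) : ℂ) * (GA t - Complex.I * GB t) with hXdef
  set X1 : ℝ → ℂ := fun t : ℝ => deriv xC t - ((Real.sqrt Real.pi : ℝ) : ℂ) * (GA1 t - Complex.I * GB1 t) with hX1def
  have hsolX : IsSol X X1 E := by
    intro e he
    obtain ⟨ha, ha2⟩ := hsolA e he
    obtain ⟨hb, hb2⟩ := hsolB e he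
    obtain ⟨hx1, hx2⟩ := hxsol e he
    constructor
    · exact hx1.sub ((ha.sub (hb.const_mul Complex.I)).const_mul _)
    · have h : HasDerivAt X1 _ e := hx2.sub ((ha2.sub (hb2.const_mul Complex.I)).const_mul
        ((Real.sqrt Real.pi : ℝ) : ℂ))
      convert h using 1
      simp only [SolRHS, hXdef, hX1def]
      ring
  -- Wronskian-type constants
  have he₀ : E/2 ∈ Ioo (0:ℝ) E := ⟨by linarith, by linarith⟩
  set cAB : ℂ := Wr GA GA1 GB GB1 (E/2) with hcABdef
  set cBX : ℂ := Wr GB GB1 X X1 (E/2) with hcBXdef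
  set cXA : ℂ := Wr X X1 GA GA1 (E/2) with hcXAdef
  set dBx : ℂ := Wr GB GB1 xC (fun t => deriv xC t) (E/2) with hdBxdef
  set dxA : ℂ := Wr xC (fun t => deriv xC t) GA GA1 (E/2) with hdxAdef
  set tXx : ℂ := Wr X X1 xC (fun t => deriv xC t) (E/2) with htXxdef
  have hcABe : ∀ e ∈ Ioo (0:ℝ) E, Wr GA GA1 GB GB1 e = cAB :=
    fun e he => wr_const hsolA hsolB e he (E/2) he₀
  have hcBXe : ∀ e ∈ Ioo (0:ℝ) E, Wr GB GB1 X X1 e = cBX :=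
    fun e he => wr_const hsolB hsolX e he (E/2) he₀
  have hcXAe : ∀ e ∈ Ioo (0:ℝ) E, Wr X X1 GA GA1 e = cXA :=
    fun e he => wr_const hsolX hsolA e he (E/2) he₀
  have hdBxe : ∀ e ∈ Ioo (0:ℝ) E, Wr GB GB1 xC (fun t => deriv xC t) e = dBx :=
    fun e he => wr_const hsolB hxsol e he (E/2) he₀
  have hdxAe : ∀ e ∈ Ioo (0:ℝ) E, Wr xC (fun t => deriv xC t) GA GA1 e = dxA :=
    fun e he => wr_const hxsol hsolA e he (E/2) he₀
  have htXxe : ∀ e ∈ Ioo (0:ℝ) E, Wr X X1 xC (fun t => deriv xC t) e = tXx :=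
    fun e he => wr_const hsolX hxsol e he (E/2) he₀
  -- pointwise linear identities
  have hid1 : ∀ e ∈ Ioo (0:ℝ) E, cAB * X e + cBX * GA e + cXA * GB e = 0 := by
    intro e he
    have := wr_cyclic GA GA1 GB GB1 X X1 e
    rwa [hcABe e he, hcBXe e he, hcXAe e he] at this
  have hid2 : ∀ e ∈ Ioo (0:ℝ) E, cAB * xC e + dBx * GA e + dxA * GB e = 0 := by
    intro e he
    have := wr_cyclic GA GA1 GB GB1 xC (fun t => deriv xC t) e
    rwa [hcABe e he, hdBxe e he, hdxAe e he] at this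
  have hid3 : ∀ e ∈ Ioo (0:ℝ) E, -cXA * xC e + tXx * GA e + dxA * X e = 0 := by
    intro e he
    have h := wr_cyclic GA GA1 X X1 xC (fun t => deriv xC t) e
    have hAX : Wr GA GA1 X X1 e = -cXA := by
      rw [← hcXAe e he]; simp only [Wr]; ring
    rwa [hAX, htXxe e he, hdxAe e he] at h
  
  -- lower bound for ‖xC‖
  have hxlow : ∀ e ∈ Ioo (0:ℝ) E, e ^ ((1:ℝ)/6) / 2 ≤ ‖xC e‖ ∧ xC e ≠ 0 := by
    intro e he
    obtain ⟨_, _, _, _, hCxe, heε₁⟩ := hmem e he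
    obtain ⟨r, hr, hxeq⟩ := hxA e ⟨he.1, heε₁⟩
    have h16 : (0:ℝ) < e ^ ((1:ℝ)/6) := Real.rpow_pos_of_pos he.1 _
    have hnorm : ‖xC e‖ = e ^ ((1:ℝ)/6) * ‖1 + r‖ := by
      rw [hxeq, norm_mul, norm_mul, Complex.norm_real, Real.norm_eq_abs, abs_of_pos h16,
        show Complex.I * (((2 / (3*e) : ℝ) : ℂ) - ((Real.pi/4 : ℝ) : ℂ))
          = (((2/(3*e) - Real.pi/4 : ℝ)) : ℂ) * Complex.I by push_cast; ring,
        Complex.norm_exp_ofReal_mul_I]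
      ring
    have h1r : (1:ℝ)/2 ≤ ‖1 + r‖ := by
      have h := norm_add_le (1 + r) (-r)
      simp only [add_neg_cancel_right, norm_one, norm_neg] at h
      linarith
    have hlow : e ^ ((1:ℝ)/6) / 2 ≤ ‖xC e‖ := by rw [hnorm]; nlinarith
    exact ⟨hlow, norm_pos_iff.1 (lt_of_lt_of_le (by positivity) hlow)⟩
  have pisq : Real.sqrt Real.pi * Real.pi ^ (-(1:ℝ)/2) = 1 := by
    rw [Real.sqrt_eq_rpow, ← Real.rpow_add hπ]
    norm_num
  have hsqc : ((Real.sqrt Real.pi : ℝ) : ℂ) * ((Real.pi ^ (-(1:ℝ)/2) : ℝ) : ℂ) = 1 := by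
    exact_mod_cast congrArg (fun x : ℝ => (x : ℂ)) pisq
  have hpine : (0:ℝ) < Real.pi ^ (-(1:ℝ)/2) := Real.rpow_pos_of_pos hπ _
  have hpihalf : (1:ℝ)/2 ≤ Real.pi ^ (-(1:ℝ)/2) := by
    have h4 : (4:ℝ) ^ (-(1:ℝ)/2) ≤ Real.pi ^ (-(1:ℝ)/2) :=
      Real.rpow_le_rpow_of_nonpos hπ Real.pi_le_four (by norm_num)
    have : (4:ℝ) ^ (-(1:ℝ)/2) = 1/2 := by
      rw [show (4:ℝ) = 2^(2:ℕ) by norm_num, ← Real.rpow_natCast 2 2,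
        ← Real.rpow_mul (by norm_num : (0:ℝ) ≤ 2)]
      norm_num [Real.rpow_neg_one]
    linarith
  -- evaluation at the cosine-peak points
  have estA : ∀ δ : ℝ, 0 < δ → ∃ e, e ∈ Ioo (0:ℝ) E ∧ e < δ ∧
      Real.pi ^ (-(1:ℝ)/2) * e ^ ((1:ℝ)/6) / 4 ≤ ‖GA e‖ ∧
      ‖GB e‖ ≤ 2*CB * (Real.pi ^ (-(1:ℝ)/2) * e ^ ((1:ℝ)/6)) * e ∧
      ‖X e‖ ≤ (4*S+4) * (Real.pi ^ (-(1:ℝ)/2) * e ^ ((1:ℝ)/6)) * e := by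
    intro δ hδ
    obtain ⟨n, e, he0, heδE, hn⟩ := seq_exists (π/4) (min δ E) (by positivity) (lt_min hδ hE0)
    have heE : e ∈ Ioo (0:ℝ) E := ⟨he0, lt_of_lt_of_le heδE (min_le_right _ _)⟩
    obtain ⟨hzA, hzB, hCAe, hCBe, hCxe, heε₁⟩ := hmem e heE
    obtain ⟨φa, ra, hφa, hra, hAeq⟩ := airy_eval hAiA he0 hzA
    obtain ⟨φb, rb, hφb, hrb, hBeq⟩ := airy_eval_sin hBiA he0 hzB
    obtain ⟨r, hr, hxeq⟩ := hxA e ⟨he0, heε₁⟩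
    have hphA : 2 / (3*e) - π/4 + φa = φa + (n:ℤ) * (2*π) := by push_cast; rw [hn]; ring
    have hphB : 2 / (3*e) - π/4 + φb = φb + (n:ℤ) * (2*π) := by push_cast; rw [hn]; ring
    rw [hphA, Real.cos_add_int_mul_two_pi] at hAeq
    rw [hphB, Real.sin_add_int_mul_two_pi] at hBeq
    have hexp : Complex.exp (Complex.I * (((2 / (3*e) : ℝ) : ℂ) - ((Real.pi/4 : ℝ) : ℂ))) = 1 := by
      have hres : (2/(3*e) - π/4 : ℝ) = ((0:ℝ) + (n:ℤ)*(2*π) : ℝ) := by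
        push_cast; rw [hn]; ring
      have h1 : (((2 / (3*e) : ℝ) : ℂ) - ((Real.pi/4 : ℝ) : ℂ))
          = ((((0:ℝ) + (n:ℤ)*(2*π) : ℝ)) : ℂ) := by exact_mod_cast congrArg (fun x : ℝ => (x:ℂ)) hres
      rw [h1, show Complex.I * ((((0:ℝ) + (n:ℤ)*(2*π) : ℝ)) : ℂ)
          = ((((0:ℝ) + (n:ℤ)*(2*π) : ℝ)) : ℂ) * Complex.I by ring,
        Complex.exp_mul_I, ← Complex.ofReal_cos, ← Complex.ofReal_sin,
        Real.cos_add_int_mul_two_pi, Real.sin_add_int_mul_two_pi]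
      simp
    rw [hexp, mul_one] at hxeq
    obtain ⟨hb1, hb2, hb3, hb4⟩ := trig_bounds hφa hra hCAe
    obtain ⟨hc1, hc2, hc3, hc4⟩ := trig_bounds hφb hrb hCBe
    have h16 : (0:ℝ) < e ^ ((1:ℝ)/6) := Real.rpow_pos_of_pos he0 _
    refine ⟨e, heE, lt_of_lt_of_le heδE (min_le_left _ _), ?_, ?_, ?_⟩
    · have hval : ‖GA e‖ = Real.pi ^ (-(1:ℝ)/2) * e ^ ((1:ℝ)/6) * (Real.cos φa * (1+ra)) := by
        simp only [hGAdef]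
        rw [hAeq, Complex.norm_real, Real.norm_eq_abs,
          abs_of_pos (by nlinarith [mul_pos hpine h16, hb3])]
        ring
      rw [hval]; nlinarith [mul_pos hpine h16, hb3]
    · have hval : ‖GB e‖ = Real.pi ^ (-(1:ℝ)/2) * e ^ ((1:ℝ)/6) * |Real.sin φb * (1+rb)| := by
        simp only [hGBdef]
        rw [hBeq, Complex.norm_real, Real.norm_eq_abs,
          show -(Real.pi ^ (-(1:ℝ)/2)) * e ^ ((1:ℝ)/6) * Real.sin φb * (1+rb)
            = -(Real.pi ^ (-(1:ℝ)/2) * e ^ ((1:ℝ)/6) * (Real.sin φb * (1+rb))) by ring,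
          abs_neg, abs_mul, abs_of_pos (by positivity : (0:ℝ) < Real.pi ^ (-(1:ℝ)/2) * e ^ ((1:ℝ)/6))]
      rw [hval]
      calc Real.pi ^ (-(1:ℝ)/2) * e ^ ((1:ℝ)/6) * |Real.sin φb * (1+rb)|
          ≤ Real.pi ^ (-(1:ℝ)/2) * e ^ ((1:ℝ)/6) * (2*(CB*e)) := by
            apply mul_le_mul_of_nonneg_left (le_trans hc2 (by nlinarith)) (by positivity)
        _ = 2*CB * (Real.pi ^ (-(1:ℝ)/2) * e ^ ((1:ℝ)/6)) * e := by ring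
    · have hXe : X e = ((e ^ ((1:ℝ)/6) : ℝ) : ℂ) * ((1 + r)
          - ((Real.cos φa * (1+ra) : ℝ) : ℂ)
          - Complex.I * ((Real.sin φb * (1+rb) : ℝ) : ℂ)) := by
        simp only [hXdef, hGAdef, hGBdef]
        rw [hAeq, hBeq, hxeq]
        push_cast [-Complex.ofReal_cos, -Complex.ofReal_sin]
        linear_combination (-(((e ^ ((1:ℝ)/6) : ℝ) : ℂ)
          * (((Real.cos φa : ℝ) : ℂ) * (1 + (ra:ℂ))
            + Complex.I * ((Real.sin φb : ℝ) : ℂ) * (1 + (rb:ℂ))))) * hsqc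
      have hbr : ‖(1 + r) - ((Real.cos φa * (1+ra) : ℝ) : ℂ)
          - Complex.I * ((Real.sin φb * (1+rb) : ℝ) : ℂ)‖ ≤ Cx*e + 2*(CA*e) + 2*(CB*e) := by
        have e1 : (1 + r) - ((Real.cos φa * (1+ra) : ℝ) : ℂ)
            - Complex.I * ((Real.sin φb * (1+rb) : ℝ) : ℂ)
            = (r + (((1 - Real.cos φa * (1+ra) : ℝ)) : ℂ))
              + (-(Complex.I * ((Real.sin φb * (1+rb) : ℝ) : ℂ))) := by push_cast; ring
        rw [e1]
        calc ‖(r + (((1 - Real.cos φa * (1+ra) : ℝ)) : ℂ))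
              + (-(Complex.I * ((Real.sin φb * (1+rb) : ℝ) : ℂ)))‖
            ≤ ‖r + (((1 - Real.cos φa * (1+ra) : ℝ)) : ℂ)‖
              + ‖-(Complex.I * ((Real.sin φb * (1+rb) : ℝ) : ℂ))‖ := norm_add_le _ _
          _ ≤ (‖r‖ + ‖(((1 - Real.cos φa * (1+ra) : ℝ)) : ℂ)‖)
              + ‖-(Complex.I * ((Real.sin φb * (1+rb) : ℝ) : ℂ))‖ := by
                gcongr; exact norm_add_le _ _
          _ = ‖r‖ + |1 - Real.cos φa * (1+ra)| + |Real.sin φb * (1+rb)| := by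
                rw [norm_neg, norm_mul, Complex.norm_I, one_mul, Complex.norm_real,
                  Complex.norm_real, Real.norm_eq_abs, Real.norm_eq_abs]
          _ ≤ Cx*e + 2*(CA*e) + 2*(CB*e) := by
                gcongr
      have hXnorm : ‖X e‖ ≤ e ^ ((1:ℝ)/6) * (Cx*e + 2*(CA*e) + 2*(CB*e)) := by
        rw [hXe, norm_mul, Complex.norm_real, Real.norm_eq_abs, abs_of_pos h16]
        exact mul_le_mul_of_nonneg_left hbr h16.le
      have hepr : (0:ℝ) ≤ e ^ ((1:ℝ)/6) * e := by positivity
      calc ‖X e‖ ≤ e ^ ((1:ℝ)/6) * (Cx*e + 2*(CA*e) + 2*(CB*e)) := hXnorm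
        _ = (Cx + 2*CA + 2*CB) * (e ^ ((1:ℝ)/6) * e) := by ring
        _ ≤ (4*S+4) * ((1:ℝ)/2) * (e ^ ((1:ℝ)/6) * e) := by
              apply mul_le_mul_of_nonneg_right _ hepr
              simp only [hSdef]; linarith
        _ ≤ (4*S+4) * (Real.pi ^ (-(1:ℝ)/2)) * (e ^ ((1:ℝ)/6) * e) := by
              apply mul_le_mul_of_nonneg_right _ hepr
              apply mul_le_mul_of_nonneg_left hpihalf (by positivity)
        _ = (4*S+4) * (Real.pi ^ (-(1:ℝ)/2) * e ^ ((1:ℝ)/6)) * e := by ring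
  
  -- evaluation at the sine-peak points
  have estB : ∀ δ : ℝ, 0 < δ → ∃ e, e ∈ Ioo (0:ℝ) E ∧ e < δ ∧
      Real.pi ^ (-(1:ℝ)/2) * e ^ ((1:ℝ)/6) / 4 ≤ ‖GB e‖ ∧
      ‖GA e‖ ≤ 2*CA * (Real.pi ^ (-(1:ℝ)/2) * e ^ ((1:ℝ)/6)) * e ∧
      ‖X e‖ ≤ (4*S+4) * (Real.pi ^ (-(1:ℝ)/2) * e ^ ((1:ℝ)/6)) * e := by
    intro δ hδ
    obtain ⟨n, e, he0, heδE, hn⟩ := seq_exists (7*π/4) (min δ E) (by positivity) (lt_min hδ hE0)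
    have heE : e ∈ Ioo (0:ℝ) E := ⟨he0, lt_of_lt_of_le heδE (min_le_right _ _)⟩
    obtain ⟨hzA, hzB, hCAe, hCBe, hCxe, heε₁⟩ := hmem e heE
    obtain ⟨φa, ra, hφa, hra, hAeq⟩ := airy_eval hAiA he0 hzA
    obtain ⟨φb, rb, hφb, hrb, hBeq⟩ := airy_eval_sin hBiA he0 hzB
    obtain ⟨r, hr, hxeq⟩ := hxA e ⟨he0, heε₁⟩
    have hphA : 2 / (3*e) - π/4 + φa = (φa - π/2) + ((n+1:ℤ)) * (2*π) := by
      push_cast; rw [hn]; ring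
    have hphB : 2 / (3*e) - π/4 + φb = (φb - π/2) + ((n+1:ℤ)) * (2*π) := by
      push_cast; rw [hn]; ring
    rw [hphA, Real.cos_add_int_mul_two_pi, show φa - π/2 = -(π/2 - φa) by ring,
      Real.cos_neg, Real.cos_pi_div_two_sub] at hAeq
    rw [hphB, Real.sin_add_int_mul_two_pi, show φb - π/2 = -(π/2 - φb) by ring,
      Real.sin_neg, Real.sin_pi_div_two_sub] at hBeq
    have hexp : Complex.exp (Complex.I * (((2 / (3*e) : ℝ) : ℂ) - ((Real.pi/4 : ℝ) : ℂ)))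
        = -Complex.I := by
      have hres : (2/(3*e) - π/4 : ℝ) = (-(π/2) + ((n+1:ℤ))*(2*π) : ℝ) := by
        push_cast; rw [hn]; ring
      have h1 : (((2 / (3*e) : ℝ) : ℂ) - ((Real.pi/4 : ℝ) : ℂ))
          = (((-(π/2) + ((n+1:ℤ))*(2*π) : ℝ)) : ℂ) := by
        exact_mod_cast congrArg (fun x : ℝ => (x:ℂ)) hres
      rw [h1, show Complex.I * (((-(π/2) + ((n+1:ℤ))*(2*π) : ℝ)) : ℂ)
          = (((-(π/2) + ((n+1:ℤ))*(2*π) : ℝ)) : ℂ) * Complex.I by ring,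
        Complex.exp_mul_I, ← Complex.ofReal_cos, ← Complex.ofReal_sin,
        Real.cos_add_int_mul_two_pi, Real.sin_add_int_mul_two_pi]
      simp
    rw [hexp] at hxeq
    obtain ⟨hb1, hb2, hb3, hb4⟩ := trig_bounds hφa hra hCAe
    obtain ⟨hc1, hc2, hc3, hc4⟩ := trig_bounds hφb hrb hCBe
    have h16 : (0:ℝ) < e ^ ((1:ℝ)/6) := Real.rpow_pos_of_pos he0 _
    refine ⟨e, heE, lt_of_lt_of_le heδE (min_le_left _ _), ?_, ?_, ?_⟩
    · have hpos : (0:ℝ) < Real.pi ^ (-(1:ℝ)/2) * e ^ ((1:ℝ)/6) * (Real.cos φb * (1+rb)) := by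
        nlinarith [mul_pos hpine h16, hc3]
      have hval : ‖GB e‖ = Real.pi ^ (-(1:ℝ)/2) * e ^ ((1:ℝ)/6) * (Real.cos φb * (1+rb)) := by
        simp only [hGBdef]
        rw [hBeq, Complex.norm_real, Real.norm_eq_abs,
          show -(Real.pi ^ (-(1:ℝ)/2)) * e ^ ((1:ℝ)/6) * (-Real.cos φb) * (1+rb)
            = Real.pi ^ (-(1:ℝ)/2) * e ^ ((1:ℝ)/6) * (Real.cos φb * (1+rb)) by ring,
          abs_of_pos hpos]
      rw [hval]; nlinarith [mul_pos hpine h16, hc3]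
    · have hval : ‖GA e‖ = Real.pi ^ (-(1:ℝ)/2) * e ^ ((1:ℝ)/6) * |Real.sin φa * (1+ra)| := by
        simp only [hGAdef]
        rw [hAeq, Complex.norm_real, Real.norm_eq_abs,
          show Real.pi ^ (-(1:ℝ)/2) * e ^ ((1:ℝ)/6) * Real.sin φa * (1+ra)
            = Real.pi ^ (-(1:ℝ)/2) * e ^ ((1:ℝ)/6) * (Real.sin φa * (1+ra)) by ring,
          abs_mul, abs_of_pos (by positivity : (0:ℝ) < Real.pi ^ (-(1:ℝ)/2) * e ^ ((1:ℝ)/6))]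
      rw [hval]
      calc Real.pi ^ (-(1:ℝ)/2) * e ^ ((1:ℝ)/6) * |Real.sin φa * (1+ra)|
          ≤ Real.pi ^ (-(1:ℝ)/2) * e ^ ((1:ℝ)/6) * (2*(CA*e)) := by
            apply mul_le_mul_of_nonneg_left hb2 (by positivity)
        _ = 2*CA * (Real.pi ^ (-(1:ℝ)/2) * e ^ ((1:ℝ)/6)) * e := by ring
    · have hXe : X e = ((e ^ ((1:ℝ)/6) : ℝ) : ℂ) * (-Complex.I * (1 + r)
          - ((Real.sin φa * (1+ra) : ℝ) : ℂ)
          + Complex.I * ((Real.cos φb * (1+rb) : ℝ) : ℂ)) := by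
        simp only [hXdef, hGAdef, hGBdef]
        rw [hAeq, hBeq, hxeq]
        push_cast [-Complex.ofReal_cos, -Complex.ofReal_sin]
        linear_combination (-(((e ^ ((1:ℝ)/6) : ℝ) : ℂ)
          * (((Real.sin φa : ℝ) : ℂ) * (1 + (ra:ℂ))
            - Complex.I * ((Real.cos φb : ℝ) : ℂ) * (1 + (rb:ℂ))))) * hsqc
      have hbr : ‖-Complex.I * (1 + r) - ((Real.sin φa * (1+ra) : ℝ) : ℂ)
          + Complex.I * ((Real.cos φb * (1+rb) : ℝ) : ℂ)‖ ≤ 2*(CA*e) + (2*(CB*e) + Cx*e) := by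
        have e1 : -Complex.I * (1 + r) - ((Real.sin φa * (1+ra) : ℝ) : ℂ)
            + Complex.I * ((Real.cos φb * (1+rb) : ℝ) : ℂ)
            = (-(((Real.sin φa * (1+ra) : ℝ) : ℂ)))
              + Complex.I * (((Real.cos φb * (1+rb) - 1 : ℝ) : ℂ) - r) := by push_cast; ring
        rw [e1]
        calc ‖(-(((Real.sin φa * (1+ra) : ℝ) : ℂ)))
              + Complex.I * (((Real.cos φb * (1+rb) - 1 : ℝ) : ℂ) - r)‖
            ≤ ‖-(((Real.sin φa * (1+ra) : ℝ) : ℂ))‖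
              + ‖Complex.I * (((Real.cos φb * (1+rb) - 1 : ℝ) : ℂ) - r)‖ := norm_add_le _ _
          _ = |Real.sin φa * (1+ra)| + ‖(((Real.cos φb * (1+rb) - 1 : ℝ) : ℂ)) - r‖ := by
              rw [norm_neg, Complex.norm_real, Real.norm_eq_abs, norm_mul, Complex.norm_I, one_mul]
          _ ≤ |Real.sin φa * (1+ra)| + (|Real.cos φb * (1+rb) - 1| + ‖r‖) := by
              gcongr
              calc ‖(((Real.cos φb * (1+rb) - 1 : ℝ) : ℂ)) - r‖
                  ≤ ‖(((Real.cos φb * (1+rb) - 1 : ℝ) : ℂ))‖ + ‖r‖ := norm_sub_le _ _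
                _ = |Real.cos φb * (1+rb) - 1| + ‖r‖ := by
                    rw [Complex.norm_real, Real.norm_eq_abs]
          _ ≤ 2*(CA*e) + (2*(CB*e) + Cx*e) := by
              rw [abs_sub_comm]
              gcongr
      have hXnorm : ‖X e‖ ≤ e ^ ((1:ℝ)/6) * (2*(CA*e) + (2*(CB*e) + Cx*e)) := by
        rw [hXe, norm_mul, Complex.norm_real, Real.norm_eq_abs, abs_of_pos h16]
        exact mul_le_mul_of_nonneg_left hbr h16.le
      have hepr : (0:ℝ) ≤ e ^ ((1:ℝ)/6) * e := by positivity
      calc ‖X e‖ ≤ e ^ ((1:ℝ)/6) * (2*(CA*e) + (2*(CB*e) + Cx*e)) := hXnorm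
        _ = (2*CA + 2*CB + Cx) * (e ^ ((1:ℝ)/6) * e) := by ring
        _ ≤ (4*S+4) * ((1:ℝ)/2) * (e ^ ((1:ℝ)/6) * e) := by
              apply mul_le_mul_of_nonneg_right _ hepr
              simp only [hSdef]; linarith
        _ ≤ (4*S+4) * (Real.pi ^ (-(1:ℝ)/2)) * (e ^ ((1:ℝ)/6) * e) := by
              apply mul_le_mul_of_nonneg_right _ hepr
              apply mul_le_mul_of_nonneg_left hpihalf (by positivity)
        _ = (4*S+4) * (Real.pi ^ (-(1:ℝ)/2) * e ^ ((1:ℝ)/6)) * e := by ring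
  
  have hpile1 : Real.pi ^ (-(1:ℝ)/2) ≤ 1 :=
    Real.rpow_le_one_of_one_le_of_nonpos (by linarith [Real.pi_gt_three]) (by norm_num)
  -- the Wronskian of X with GB vanishes
  have hcBX0 : cBX = 0 := by
    apply eq_zero_of_small _ (4 * (‖cAB‖ * (4*S+4) + ‖cXA‖ * (2*CB)))
    intro δ hδ
    obtain ⟨e, heE, heδ, hGAlow, hGBup, hXup⟩ := estA δ hδ
    refine ⟨e, heE.1, heδ, ?_⟩
    have hid := hid1 e heE
    have hq : (0:ℝ) < Real.pi ^ (-(1:ℝ)/2) * e ^ ((1:ℝ)/6) := by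
      have := Real.rpow_pos_of_pos heE.1 ((1:ℝ)/6)
      positivity
    have h2 : ‖cBX‖ * ‖GA e‖ ≤ (‖cAB‖ * (4*S+4) + ‖cXA‖ * (2*CB))
        * (Real.pi ^ (-(1:ℝ)/2) * e ^ ((1:ℝ)/6)) * e := by
      have hrw : cBX * GA e = -(cAB * X e) - cXA * GB e := by linear_combination hid
      calc ‖cBX‖ * ‖GA e‖ = ‖cBX * GA e‖ := (norm_mul _ _).symm
        _ = ‖-(cAB * X e) - cXA * GB e‖ := by rw [hrw]
        _ ≤ ‖cAB * X e‖ + ‖cXA * GB e‖ := by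
            refine le_trans (norm_sub_le _ _) ?_
            rw [norm_neg]
        _ = ‖cAB‖ * ‖X e‖ + ‖cXA‖ * ‖GB e‖ := by rw [norm_mul, norm_mul]
        _ ≤ ‖cAB‖ * ((4*S+4) * (Real.pi ^ (-(1:ℝ)/2) * e ^ ((1:ℝ)/6)) * e)
            + ‖cXA‖ * (2*CB * (Real.pi ^ (-(1:ℝ)/2) * e ^ ((1:ℝ)/6)) * e) := by gcongr
        _ = (‖cAB‖ * (4*S+4) + ‖cXA‖ * (2*CB))
            * (Real.pi ^ (-(1:ℝ)/2) * e ^ ((1:ℝ)/6)) * e := by ring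
    have h3 : ‖cBX‖ * (Real.pi ^ (-(1:ℝ)/2) * e ^ ((1:ℝ)/6) / 4) ≤ ‖cBX‖ * ‖GA e‖ :=
      mul_le_mul_of_nonneg_left hGAlow (norm_nonneg _)
    have h5 : ‖cBX‖ * (Real.pi ^ (-(1:ℝ)/2) * e ^ ((1:ℝ)/6))
        ≤ (4 * (‖cAB‖ * (4*S+4) + ‖cXA‖ * (2*CB)) * e)
          * (Real.pi ^ (-(1:ℝ)/2) * e ^ ((1:ℝ)/6)) := by nlinarith
    exact le_of_mul_le_mul_right h5 hq
  -- the Wronskian of X with GA vanishes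
  have hcXA0 : cXA = 0 := by
    apply eq_zero_of_small _ (4 * (‖cAB‖ * (4*S+4) + ‖cBX‖ * (2*CA)))
    intro δ hδ
    obtain ⟨e, heE, heδ, hGBlow, hGAup, hXup⟩ := estB δ hδ
    refine ⟨e, heE.1, heδ, ?_⟩
    have hid := hid1 e heE
    have hq : (0:ℝ) < Real.pi ^ (-(1:ℝ)/2) * e ^ ((1:ℝ)/6) := by
      have := Real.rpow_pos_of_pos heE.1 ((1:ℝ)/6)
      positivity
    have h2 : ‖cXA‖ * ‖GB e‖ ≤ (‖cAB‖ * (4*S+4) + ‖cBX‖ * (2*CA))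
        * (Real.pi ^ (-(1:ℝ)/2) * e ^ ((1:ℝ)/6)) * e := by
      have hrw : cXA * GB e = -(cAB * X e) - cBX * GA e := by linear_combination hid
      calc ‖cXA‖ * ‖GB e‖ = ‖cXA * GB e‖ := (norm_mul _ _).symm
        _ = ‖-(cAB * X e) - cBX * GA e‖ := by rw [hrw]
        _ ≤ ‖cAB * X e‖ + ‖cBX * GA e‖ := by
            refine le_trans (norm_sub_le _ _) ?_
            rw [norm_neg]
        _ = ‖cAB‖ * ‖X e‖ + ‖cBX‖ * ‖GA e‖ := by rw [norm_mul, norm_mul]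
        _ ≤ ‖cAB‖ * ((4*S+4) * (Real.pi ^ (-(1:ℝ)/2) * e ^ ((1:ℝ)/6)) * e)
            + ‖cBX‖ * (2*CA * (Real.pi ^ (-(1:ℝ)/2) * e ^ ((1:ℝ)/6)) * e) := by gcongr
        _ = (‖cAB‖ * (4*S+4) + ‖cBX‖ * (2*CA))
            * (Real.pi ^ (-(1:ℝ)/2) * e ^ ((1:ℝ)/6)) * e := by ring
    have h3 : ‖cXA‖ * (Real.pi ^ (-(1:ℝ)/2) * e ^ ((1:ℝ)/6) / 4) ≤ ‖cXA‖ * ‖GB e‖ :=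
      mul_le_mul_of_nonneg_left hGBlow (norm_nonneg _)
    have h5 : ‖cXA‖ * (Real.pi ^ (-(1:ℝ)/2) * e ^ ((1:ℝ)/6))
        ≤ (4 * (‖cAB‖ * (4*S+4) + ‖cBX‖ * (2*CA)) * e)
          * (Real.pi ^ (-(1:ℝ)/2) * e ^ ((1:ℝ)/6)) := by nlinarith
    exact le_of_mul_le_mul_right h5 hq
  have hXzero : ∀ e ∈ Ioo (0:ℝ) E, cAB * X e = 0 := by
    intro e he
    have h := hid1 e he
    rw [hcBX0, hcXA0] at h
    simpa using h
  have hX0 : ∀ e ∈ Ioo (0:ℝ) E, X e = 0 := by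
    by_cases hcab : cAB = 0
    · have hdBx0 : dBx = 0 := by
        apply eq_zero_of_small _ (4 * (‖dxA‖ * (2*CB)))
        intro δ hδ
        obtain ⟨e, heE, heδ, hGAlow, hGBup, _⟩ := estA δ hδ
        refine ⟨e, heE.1, heδ, ?_⟩
        have hid := hid2 e heE
        rw [hcab] at hid
        have hq : (0:ℝ) < Real.pi ^ (-(1:ℝ)/2) * e ^ ((1:ℝ)/6) := by
          have := Real.rpow_pos_of_pos heE.1 ((1:ℝ)/6)
          positivity
        have h2 : ‖dBx‖ * ‖GA e‖ ≤ (‖dxA‖ * (2*CB))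
            * (Real.pi ^ (-(1:ℝ)/2) * e ^ ((1:ℝ)/6)) * e := by
          have hrw : dBx * GA e = -(dxA * GB e) := by linear_combination hid
          calc ‖dBx‖ * ‖GA e‖ = ‖dBx * GA e‖ := (norm_mul _ _).symm
            _ = ‖dxA‖ * ‖GB e‖ := by rw [hrw, norm_neg, norm_mul]
            _ ≤ ‖dxA‖ * (2*CB * (Real.pi ^ (-(1:ℝ)/2) * e ^ ((1:ℝ)/6)) * e) := by gcongr
            _ = (‖dxA‖ * (2*CB)) * (Real.pi ^ (-(1:ℝ)/2) * e ^ ((1:ℝ)/6)) * e := by ring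
        have h3 : ‖dBx‖ * (Real.pi ^ (-(1:ℝ)/2) * e ^ ((1:ℝ)/6) / 4) ≤ ‖dBx‖ * ‖GA e‖ :=
          mul_le_mul_of_nonneg_left hGAlow (norm_nonneg _)
        have h5 : ‖dBx‖ * (Real.pi ^ (-(1:ℝ)/2) * e ^ ((1:ℝ)/6))
            ≤ (4 * (‖dxA‖ * (2*CB)) * e) * (Real.pi ^ (-(1:ℝ)/2) * e ^ ((1:ℝ)/6)) := by
          nlinarith
        exact le_of_mul_le_mul_right h5 hq
      have hdxA0 : dxA = 0 := by
        obtain ⟨e, heE, _, hGBlow, _, _⟩ := estB E hE0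
        have hid := hid2 e heE
        rw [hcab, hdBx0] at hid
        have h : dxA * GB e = 0 := by
          have := hid
          ring_nf at this ⊢
          linear_combination this
        have hGBne : GB e ≠ 0 := by
          apply norm_pos_iff.1
          have hq : (0:ℝ) < Real.pi ^ (-(1:ℝ)/2) * e ^ ((1:ℝ)/6) / 4 := by
            have := Real.rpow_pos_of_pos heE.1 ((1:ℝ)/6)
            positivity
          linarith
        exact (mul_eq_zero.mp h).resolve_right hGBne
      have htXx0 : tXx = 0 := by
        obtain ⟨e, heE, _, hGAlow, _, _⟩ := estA E hE0
        have hid := hid3 e heE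
        rw [hcXA0, hdxA0] at hid
        have h : tXx * GA e = 0 := by
          ring_nf at hid ⊢
          linear_combination hid
        have hGAne : GA e ≠ 0 := by
          apply norm_pos_iff.1
          have hq : (0:ℝ) < Real.pi ^ (-(1:ℝ)/2) * e ^ ((1:ℝ)/6) / 4 := by
            have := Real.rpow_pos_of_pos heE.1 ((1:ℝ)/6)
            positivity
          linarith
        exact (mul_eq_zero.mp h).resolve_right hGAne
      set Q : ℝ → ℂ := fun t => X t / xC t with hQdef
      have hQd : ∀ e ∈ Ioo (0:ℝ) E, HasDerivAt Q 0 e := by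
        intro e he
        have h := htXxe e he
        rw [htXx0] at h
        simp only [Wr] at h
        have hp : ((e ^ ((5:ℝ)/3) : ℝ) : ℂ) ≠ 0 := by
          exact_mod_cast (Real.rpow_pos_of_pos he.1 ((5:ℝ)/3)).ne'
        have hnum := (mul_eq_zero.mp h.symm.symm).resolve_left hp
        have hdd : HasDerivAt (fun t => X t / xC t) ((X1 e * xC e - X e * deriv xC e) / xC e ^ 2) e :=
          (hsolX e he).1.div ((hxsol e he).1) (hxlow e he).2
        convert hdd using 1
        rw [show X1 e * xC e - X e * deriv xC e = 0 by linear_combination -hnum]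
        simp
      have hQconst := const_of_deriv_zero hQd
      have hQ0 : Q (E/2) = 0 := by
        apply eq_zero_of_small _ (8*S+8)
        intro δ hδ
        obtain ⟨e, heE, heδ, _, _, hXup⟩ := estA δ hδ
        refine ⟨e, heE.1, heδ, ?_⟩
        rw [hQconst (E/2) he₀ e heE]
        obtain ⟨hxlo, hxne⟩ := hxlow e heE
        have h16 : (0:ℝ) < e ^ ((1:ℝ)/6) := Real.rpow_pos_of_pos heE.1 _
        have hxpos : (0:ℝ) < ‖xC e‖ := lt_of_lt_of_le (by positivity) hxlo
        simp only [hQdef]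
        rw [norm_div, div_le_iff₀ hxpos]
        calc ‖X e‖ ≤ (4*S+4) * (Real.pi ^ (-(1:ℝ)/2) * e ^ ((1:ℝ)/6)) * e := hXup
          _ ≤ (4*S+4) * (1 * e ^ ((1:ℝ)/6)) * e := by
              apply mul_le_mul_of_nonneg_right _ heE.1.le
              apply mul_le_mul_of_nonneg_left _ (by positivity)
              exact mul_le_mul_of_nonneg_right hpile1 h16.le
          _ = (8*S+8) * e * (e ^ ((1:ℝ)/6)/2) := by ring
          _ ≤ (8*S+8) * e * ‖xC e‖ := by
              apply mul_le_mul_of_nonneg_left hxlo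
                (mul_nonneg (by nlinarith : (0:ℝ) ≤ 8*S+8) heE.1.le)
      intro e he
      have h := hQconst e he (E/2) he₀
      rw [hQ0] at h
      simp only [hQdef] at h
      exact (div_eq_zero_iff.mp h).resolve_right (hxlow e he).2
    · intro e he
      exact (mul_eq_zero.mp (hXzero e he)).resolve_left hcab
  refine ⟨E/2, by positivity, ?_⟩
  intro e he
  have heE : e ∈ Ioo (0:ℝ) E := ⟨he.1, lt_of_le_of_lt he.2 (by linarith)⟩
  have h := hX0 e heE
  simp only [hXdef] at h
  linear_combination h
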